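/- arXiv:2206.12814 — 3 statements merged into one kernel-verified Lean document; each statement's English description precedes it below -/
import Mathlib

section
/- The set of pairs (z₁, z₂) ∈ ℂ² satisfying |z₁ + iz₂| = |z₁ − iz₂| = 1 equals the set {(e^{it} cos s, e^{it} sin s) : t, s ∈ [0, 2π]}. -/
open Complex Real

private lemma adjust (x : ℝ) : ∃ y ∈ Set.Icc (0:ℝ) (2*π),
    Real.cos y = Real.cos x ∧ Real.sin y = Real.sin x ∧
    Complex.exp (Complex.I * y) = Complex.exp (Complex.I * x) := by
  have h2π : (0:ℝ) < 2*π := by positivity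
  refine ⟨x - ⌊x / (2*π)⌋ * (2*π), ⟨Int.sub_floor_div_mul_nonneg x h2π,
    (Int.sub_floor_div_mul_lt x h2π).le⟩,
    Real.cos_sub_int_mul_two_pi x _, Real.sin_sub_int_mul_two_pi x _, ?_⟩
  have h : Complex.I * ((x - ⌊x / (2*π)⌋ * (2*π) : ℝ) : ℂ)
      = Complex.I * x - (⌊x / (2*π)⌋ : ℤ) * (2*π*Complex.I) := by push_cast; ring
  rw [h, Complex.exp_sub, Complex.exp_int_mul_two_pi_mul_I, div_one]

private lemma key (α β : ℝ) :
    Complex.exp (Complex.I * ((α+β)/2 : ℝ)) * (Real.cos ((α-β)/2) : ℂ)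
      = (Complex.exp (α * Complex.I) + Complex.exp (β * Complex.I)) / 2 ∧
    Complex.exp (Complex.I * ((α+β)/2 : ℝ)) * (Real.sin ((α-β)/2) : ℂ)
      = (Complex.exp (α * Complex.I) - Complex.exp (β * Complex.I)) * (-Complex.I) / 2 := by
  have ea : Complex.exp ((α:ℂ) * Complex.I)
      = Complex.exp (Complex.I * ((α+β)/2 : ℝ)) * Complex.exp ((((α-β)/2 : ℝ) : ℂ) * Complex.I) := by
    rw [← Complex.exp_add]; congr 1; push_cast; ring
  have eb : Complex.exp ((β:ℂ) * Complex.I)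
      = Complex.exp (Complex.I * ((α+β)/2 : ℝ)) * Complex.exp (-(((α-β)/2 : ℝ) : ℂ) * Complex.I) := by
    rw [← Complex.exp_add]; congr 1; push_cast; ring
  rw [Complex.ofReal_cos, Complex.ofReal_sin, Complex.cos, Complex.sin, ea, eb]
  constructor
  · ring
  · ring_nf

theorem stmt6 :
    {p : ℂ × ℂ | ‖p.1 + Complex.I * p.2‖ = 1 ∧
                 ‖p.1 - Complex.I * p.2‖ = 1} =
      {p : ℂ × ℂ | ∃ t ∈ Set.Icc (0 : ℝ) (2 * π), ∃ s ∈ Set.Icc (0 : ℝ) (2 * π),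
        p = (Complex.exp (Complex.I * t) * Real.cos s,
             Complex.exp (Complex.I * t) * Real.sin s)} := by
  ext ⟨z₁, z₂⟩
  simp only [Set.mem_setOf_eq]
  constructor
  · rintro ⟨h1, h2⟩
    set α := (z₁ + Complex.I * z₂).arg with hα
    set β := (z₁ - Complex.I * z₂).arg with hβ
    have e1 : z₁ + Complex.I * z₂ = Complex.exp (α * Complex.I) := by
      conv_lhs => rw [← Complex.norm_mul_exp_arg_mul_I (z₁ + Complex.I * z₂)]
      rw [h1, Complex.ofReal_one, one_mul]
    have e2 : z₁ - Complex.I * z₂ = Complex.exp (β * Complex.I) := by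
      conv_lhs => rw [← Complex.norm_mul_exp_arg_mul_I (z₁ - Complex.I * z₂)]
      rw [h2, Complex.ofReal_one, one_mul]
    obtain ⟨hc, hs⟩ := key α β
    have hz1 : z₁ = Complex.exp (Complex.I * ((α+β)/2 : ℝ)) * (Real.cos ((α-β)/2) : ℂ) := by
      rw [hc, ← e1, ← e2]; ring
    have hz2 : z₂ = Complex.exp (Complex.I * ((α+β)/2 : ℝ)) * (Real.sin ((α-β)/2) : ℂ) := by
      rw [hs, ← e1, ← e2]
      have hI : Complex.I * Complex.I = -1 := Complex.I_mul_I
      field_simp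
      ring_nf
      rw [Complex.I_sq]
      ring
    obtain ⟨t, ht, _, _, het⟩ := adjust ((α+β)/2)
    obtain ⟨s, hsm, hcs, hss, _⟩ := adjust ((α-β)/2)
    exact ⟨t, ht, s, hsm, by
      rw [Prod.ext_iff]
      exact ⟨by rw [hz1, het, hcs], by rw [hz2, het, hss]⟩⟩
  · rintro ⟨t, _, s, _, hp⟩
    simp only [Prod.mk.injEq] at hp
    obtain ⟨rfl, rfl⟩ := hp
    have habs : ‖Complex.exp (Complex.I * t)‖ = 1 := by
      rw [mul_comm, Complex.norm_exp_ofReal_mul_I]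
    constructor
    · rw [show Complex.exp (Complex.I * t) * Real.cos s + Complex.I * (Complex.exp (Complex.I * t) * Real.sin s)
          = Complex.exp (Complex.I * t) * ((Real.cos s : ℂ) + (Real.sin s : ℂ) * Complex.I) by ring,
        norm_mul, habs, one_mul, Complex.ofReal_cos, Complex.ofReal_sin, Complex.norm_cos_add_sin_mul_I]
    · rw [show Complex.exp (Complex.I * t) * Real.cos s - Complex.I * (Complex.exp (Complex.I * t) * Real.sin s)
          = Complex.exp (Complex.I * t) * ((Real.cos (-s) : ℂ) + (Real.sin (-s) : ℂ) * Complex.I) by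
            rw [Real.cos_neg, Real.sin_neg]; push_cast; ring,
        norm_mul, habs, one_mul, Complex.ofReal_cos, Complex.ofReal_sin, Complex.norm_cos_add_sin_mul_I]
end

section
/- Let f be in the scalar bicomplex Wiener algebra 𝔚, i.e. f(Z) = Σ_{n∈ℤ} f_n Zⁿ for Z ∈ ∂𝕂 with f_n ∈ BC and Σ_n ‖f_n‖ < ∞ (dual Lie norm). If f(Z) is invertible in BC for every Z ∈ ∂𝕂, then there exists g ∈ 𝔚 with f(Z)g(Z) = 1 for all Z ∈ ∂𝕂. -/
open Complex

/-- The bicomplex numbers, presented in idempotent coordinates as `ℂ × ℂ`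
(componentwise ring structure). -/
abbrev BC : Type := ℂ × ℂ

/-- The imaginary unit `i` of `ℂ(i)` inside `BC`. -/
noncomputable def BC.i : BC := (Complex.I, Complex.I)

/-- The second imaginary unit `j` of `BC`. -/
noncomputable def BC.j : BC := (-Complex.I, Complex.I)

/-- The hyperbolic unit `k = i·j`. -/
noncomputable def BC.k : BC := BC.i * BC.j

/-- The idempotent `e₁ = (1+k)/2`. -/
noncomputable def BC.e1 : BC := (1 + BC.k) / 2

/-- The idempotent `e₂ = (1−k)/2`. -/
noncomputable def BC.e2 : BC := (1 - BC.k) / 2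


/-- The dual Lie norm `‖Z‖ = |λ₁| + |λ₂|` on the bicomplex numbers. -/
noncomputable def BC.dualLieNorm (Z : BC) : ℝ := ‖Z.1‖ + ‖Z.2‖

/-- The distinguished boundary `∂𝕂 = {e^{it} e^{js} : t, s ∈ ℝ}`. -/
noncomputable def bdK : Set BC :=
  {Z | ∃ t s : ℝ,
    Z = Complex.exp (Complex.I * t) • ((Real.cos s : ℂ) • (1 : BC) + (Real.sin s : ℂ) • BC.j)}

open scoped ENNReal

set_option maxHeartbeats 1000000

noncomputable section WienerAux

instance : Fact ((1:ℝ≥0∞) ≤ 1) := ⟨le_rfl⟩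

/-- The Wiener algebra, as the sequence space `ℓ¹(ℤ, ℂ)`. -/
abbrev Wl : Type := lp (fun _ : ℤ => ℂ) 1

namespace Wl

theorem summable_norm (x : Wl) : Summable fun n => ‖x n‖ := by
  have h := lp.memℓp x
  rw [memℓp_gen_iff (by norm_num)] at h
  simpa using h

theorem memℓp_of_summable {f : ℤ → ℂ} (h : Summable fun n => ‖f n‖) : Memℓp f (1:ℝ≥0∞) := by
  apply memℓp_gen; simpa using h

theorem norm_eq (x : Wl) : ‖x‖ = ∑' n, ‖x n‖ := by
  rw [lp.norm_eq_tsum_rpow (by norm_num)]; simp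

/-- Convolution of two sequences. -/
def conv (f g : ℤ → ℂ) (n : ℤ) : ℂ := ∑' m, f m * g (n - m)

/-- The shear equivalence `(m, k) ↦ (k + m, m)`. -/
def shear : ℤ × ℤ ≃ ℤ × ℤ where
  toFun p := (p.2 + p.1, p.1)
  invFun p := (p.2, p.1 - p.2)
  left_inv p := by simp
  right_inv p := by simp

section convlemmas

variable {f g h : ℤ → ℂ} (hf : Summable fun n => ‖f n‖) (hg : Summable fun n => ‖g n‖)
  (hh : Summable fun n => ‖h n‖)

include hf hg in
theorem conv_key : Summable fun p : ℤ × ℤ => ‖f p.2 * g (p.1 - p.2)‖ := by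
  have h0 : Summable fun p : ℤ × ℤ => ‖f p.1 * g p.2‖ := hf.mul_norm hg
  rw [← shear.summable_iff]
  simpa [shear, Function.comp_def] using h0

include hf hg in
theorem conv_slice (n : ℤ) : Summable fun m => ‖f m * g (n - m)‖ :=
  (conv_key hf hg).prod_factor n

include hf hg in
theorem conv_rows : Summable fun n => ∑' m, ‖f m * g (n - m)‖ :=
  ((summable_prod_of_nonneg (fun _ => norm_nonneg _)).1 (conv_key hf hg)).2

include hf hg in
theorem summable_norm_conv : Summable fun n => ‖conv f g n‖ := by
  refine Summable.of_nonneg_of_le (fun _ => norm_nonneg _) (fun n => ?_) (conv_rows hf hg)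
  exact norm_tsum_le_tsum_norm (conv_slice hf hg n)

include hf hg in
theorem tsum_norm_conv_le :
    ∑' n, ‖conv f g n‖ ≤ (∑' n, ‖f n‖) * ∑' n, ‖g n‖ := by
  have h1 : ∑' n, ‖conv f g n‖ ≤ ∑' n, ∑' m, ‖f m * g (n - m)‖ := by
    refine Summable.tsum_le_tsum (fun n => norm_tsum_le_tsum_norm (conv_slice hf hg n))
      (summable_norm_conv hf hg) (conv_rows hf hg)
  have h2 : ∑' n, ∑' m, ‖f m * g (n - m)‖ = ∑' p : ℤ × ℤ, ‖f p.2 * g (p.1 - p.2)‖ :=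
    (Summable.tsum_prod' (f := fun p : ℤ × ℤ => ‖f p.2 * g (p.1 - p.2)‖) (conv_key hf hg)
      (conv_slice hf hg)).symm
  have h3 : ∑' p : ℤ × ℤ, ‖f p.2 * g (p.1 - p.2)‖ = ∑' p : ℤ × ℤ, ‖f p.1 * g p.2‖ := by
    rw [← shear.tsum_eq (fun p : ℤ × ℤ => ‖f p.2 * g (p.1 - p.2)‖)]
    simp [shear]
  have h4 : ∑' p : ℤ × ℤ, ‖f p.1 * g p.2‖ ≤ ∑' p : ℤ × ℤ, ‖f p.1‖ * ‖g p.2‖ := by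
    refine Summable.tsum_le_tsum (fun p => norm_mul_le _ _) (hf.mul_norm hg) ?_
    exact hf.mul_of_nonneg hg (fun _ => norm_nonneg _) (fun _ => norm_nonneg _)
  have h5 : ∑' p : ℤ × ℤ, ‖f p.1‖ * ‖g p.2‖ = (∑' n, ‖f n‖) * ∑' n, ‖g n‖ := by
    exact (tsum_mul_tsum_of_summable_norm (R := ℝ) (f := fun n => ‖f n‖)
      (g := fun n => ‖g n‖) (by simpa using hf) (by simpa using hg)).symm
  linarith

theorem conv_comm : conv f g = conv g f := by
  funext n
  unfold conv
  rw [← (Equiv.subLeft n).tsum_eq (fun m => g m * f (n - m))]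
  simp [mul_comm]

include hf hg in
theorem eval_conv {z : ℂ} (hz : ‖z‖ = 1) :
    ∑' n, conv f g n * z ^ n = (∑' n, f n * z ^ n) * ∑' n, g n * z ^ n := by
  have hz0 : z ≠ 0 := by intro h0; rw [h0] at hz; simp at hz
  have habs : ∀ (a : ℤ → ℂ) (n : ℤ), ‖a n * z ^ n‖ = ‖a n‖ := by
    intro a n
    rw [norm_mul, norm_zpow, hz, one_zpow, mul_one]
  have hfz : Summable fun n => ‖f n * z ^ n‖ := by simpa only [habs] using hf
  have hgz : Summable fun n => ‖g n * z ^ n‖ := by simpa only [habs] using hg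
  have hkey : Summable fun p : ℤ × ℤ => ‖f p.2 * g (p.1 - p.2) * z ^ p.1‖ := by
    have : ∀ p : ℤ × ℤ, ‖f p.2 * g (p.1 - p.2) * z ^ p.1‖ = ‖f p.2 * g (p.1 - p.2)‖ := by
      intro p
      rw [norm_mul, norm_zpow, hz, one_zpow, mul_one]
    simpa only [this] using conv_key hf hg
  have hsl : ∀ n : ℤ, Summable fun m : ℤ => f m * g (n - m) * z ^ n := fun n =>
    (conv_slice hf hg n).of_norm.mul_right _
  have hLHS : ∑' n, conv f g n * z ^ n = ∑' p : ℤ × ℤ, f p.2 * g (p.1 - p.2) * z ^ p.1 := by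
    rw [Summable.tsum_prod' (f := fun p : ℤ × ℤ => f p.2 * g (p.1 - p.2) * z ^ p.1) hkey.of_norm hsl]
    refine tsum_congr fun n => ?_
    rw [conv, ← tsum_mul_right]
  have hRHS : (∑' n, f n * z ^ n) * ∑' n, g n * z ^ n
      = ∑' p : ℤ × ℤ, f p.1 * g p.2 * z ^ (p.1 + p.2) := by
    rw [tsum_mul_tsum_of_summable_norm (f := fun n => f n * z ^ n)
      (g := fun n => g n * z ^ n) hfz hgz]
    refine tsum_congr fun p => ?_
    rw [zpow_add₀ hz0]; ring
  rw [hLHS, hRHS, ← shear.tsum_eq (fun p : ℤ × ℤ => f p.2 * g (p.1 - p.2) * z ^ p.1)]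
  refine tsum_congr fun p => ?_
  simp only [shear, Equiv.coe_fn_mk]
  rw [add_sub_cancel_right]
  ring_nf

include hf hg hh in
theorem conv_assoc : conv (conv f g) h = conv f (conv g h) := by
  have hC : ∀ k, ‖h k‖ ≤ ∑' n, ‖h n‖ := fun k => Summable.le_tsum hh k (fun _ _ => norm_nonneg _)
  funext n
  have hL : Summable fun p : ℤ × ℤ => ‖f p.2 * g (p.1 - p.2) * h (n - p.1)‖ := by
    refine Summable.of_nonneg_of_le (fun _ => norm_nonneg _) (fun p => ?_)
      ((conv_key hf hg).mul_right (∑' m, ‖h m‖))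
    calc ‖f p.2 * g (p.1 - p.2) * h (n - p.1)‖
        ≤ ‖f p.2 * g (p.1 - p.2)‖ * ‖h (n - p.1)‖ := norm_mul_le _ _
      _ ≤ ‖f p.2 * g (p.1 - p.2)‖ * ∑' m, ‖h m‖ :=
          mul_le_mul_of_nonneg_left (hC _) (norm_nonneg _)
  have hR : Summable fun p : ℤ × ℤ => ‖f p.1 * (g p.2 * h (n - p.1 - p.2))‖ := by
    refine Summable.of_nonneg_of_le (fun _ => norm_nonneg _) (fun p => ?_)
      ((hf.mul_of_nonneg hg (fun _ => norm_nonneg _) (fun _ => norm_nonneg _)).mul_right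
        (∑' m, ‖h m‖))
    calc ‖f p.1 * (g p.2 * h (n - p.1 - p.2))‖
        ≤ ‖f p.1‖ * (‖g p.2‖ * ‖h (n - p.1 - p.2)‖) := by
          refine (norm_mul_le _ _).trans ?_
          exact mul_le_mul_of_nonneg_left (norm_mul_le _ _) (norm_nonneg _)
      _ ≤ ‖f p.1‖ * (‖g p.2‖ * ∑' m, ‖h m‖) := by
          refine mul_le_mul_of_nonneg_left ?_ (norm_nonneg _)
          exact mul_le_mul_of_nonneg_left (hC _) (norm_nonneg _)
      _ = ‖f p.1‖ * ‖g p.2‖ * ∑' m, ‖h m‖ := by ring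
  have hLs := hL.of_norm
  have hRs := hR.of_norm
  have e1 : conv (conv f g) h n = ∑' p : ℤ × ℤ, f p.2 * g (p.1 - p.2) * h (n - p.1) := by
    have hsl : ∀ k : ℤ, Summable fun m : ℤ => f m * g (k - m) * h (n - k) := fun k =>
      (conv_slice hf hg k).of_norm.mul_right _
    rw [Summable.tsum_prod' (f := fun p : ℤ × ℤ => f p.2 * g (p.1 - p.2) * h (n - p.1)) hLs hsl]
    refine tsum_congr fun k => ?_
    rw [conv, ← tsum_mul_right]
  have e2 : conv f (conv g h) n = ∑' p : ℤ × ℤ, f p.1 * (g p.2 * h (n - p.1 - p.2)) := by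
    have hsl : ∀ m : ℤ, Summable fun j : ℤ => f m * (g j * h (n - m - j)) := by
      intro m
      have := (conv_slice hg hh (n - m)).of_norm.mul_left (f m)
      refine this.congr fun j => ?_
      rw [sub_sub]
    rw [Summable.tsum_prod' (f := fun p : ℤ × ℤ => f p.1 * (g p.2 * h (n - p.1 - p.2))) hRs hsl]
    refine tsum_congr fun m => ?_
    rw [conv, ← tsum_mul_left]
  rw [e1, e2, ← shear.tsum_eq (fun p : ℤ × ℤ => f p.2 * g (p.1 - p.2) * h (n - p.1))]
  refine tsum_congr fun p => ?_
  simp only [shear, Equiv.coe_fn_mk]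
  rw [add_sub_cancel_right, sub_sub, add_comm p.2 p.1]
  ring

include hf hg hh in
theorem conv_add : conv f (fun n => g n + h n) = fun n => conv f g n + conv f h n := by
  funext n
  unfold conv
  rw [← Summable.tsum_add (conv_slice hf hg n).of_norm (conv_slice hf hh n).of_norm]
  exact tsum_congr fun m => by ring

end convlemmas

theorem conv_zero {f : ℤ → ℂ} : conv f (0 : ℤ → ℂ) = (0 : ℤ → ℂ) := by
  funext n; simp [conv]

theorem conv_smul_left {f g : ℤ → ℂ} {c : ℂ} :
    conv (fun n => c * f n) g = fun n => c * conv f g n := by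
  funext n
  rw [conv, conv, ← tsum_mul_left]
  exact tsum_congr fun m => by ring

theorem conv_smul_right {f g : ℤ → ℂ} {c : ℂ} :
    conv f (fun n => c * g n) = fun n => c * conv f g n := by
  funext n
  rw [conv, conv, ← tsum_mul_left]
  exact tsum_congr fun m => by ring

/-- The delta function at `k`. -/
def deltaFn (k : ℤ) : ℤ → ℂ := fun n => if n = k then 1 else 0

theorem conv_deltaFn {f : ℤ → ℂ} (k : ℤ) : conv f (deltaFn k) = fun n => f (n - k) := by
  funext n
  rw [conv]
  rw [tsum_eq_single (n - k) (fun m hm => ?_)]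
  · simp [deltaFn]
  · have : n - m ≠ k := fun hc => hm (by omega)
    simp [deltaFn, this]

/-- The delta element of `Wl`. -/
def delta (k : ℤ) : Wl := lp.single 1 k 1

theorem coe_delta (k : ℤ) : ⇑(delta k) = deltaFn k := by
  funext n
  by_cases h : n = k
  · subst h; simp [delta, deltaFn, lp.single_apply_self]
  · simp [delta, deltaFn, lp.single_apply_ne _ _ _ h, h]

instance : One Wl := ⟨delta 0⟩

theorem coe_one : ⇑(1 : Wl) = deltaFn 0 := coe_delta 0

instance : Mul Wl :=
  ⟨fun x y => ⟨conv ⇑x ⇑y, memℓp_of_summable (summable_norm_conv x.summable_norm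
    y.summable_norm)⟩⟩

theorem coe_mul (x y : Wl) : ⇑(x * y) = conv ⇑x ⇑y := rfl

instance : CommRing Wl :=
  { (inferInstance : AddCommGroup Wl) with
    mul := (· * ·)
    one := (1 : Wl)
    mul_comm := fun x y => lp.ext (by rw [coe_mul, coe_mul, conv_comm])
    mul_assoc := fun x y z => lp.ext (by
      rw [coe_mul, coe_mul, coe_mul, coe_mul,
        conv_assoc x.summable_norm y.summable_norm z.summable_norm])
    one_mul := fun x => lp.ext (by
      rw [coe_mul, coe_one, conv_comm, conv_deltaFn]
      funext n; simp)
    mul_one := fun x => lp.ext (by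
      rw [coe_mul, coe_one, conv_deltaFn]
      funext n; simp)
    left_distrib := fun x y z => lp.ext (by
      rw [lp.coeFn_add, coe_mul, coe_mul, coe_mul, lp.coeFn_add]
      have := conv_add (f := ⇑x) x.summable_norm y.summable_norm z.summable_norm
      convert this using 2 <;> rfl)
    right_distrib := fun x y z => lp.ext (by
      rw [lp.coeFn_add, coe_mul, coe_mul, coe_mul, lp.coeFn_add,
        conv_comm, conv_comm (f := ⇑x), conv_comm (f := ⇑y)]
      have := conv_add (f := ⇑z) z.summable_norm x.summable_norm y.summable_norm
      convert this using 2 <;> rfl)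
    zero_mul := fun x => lp.ext (by
      rw [coe_mul, lp.coeFn_zero, conv_comm, conv_zero])
    mul_zero := fun x => lp.ext (by
      rw [coe_mul, lp.coeFn_zero, conv_zero]) }

instance : NormedCommRing Wl :=
  { (inferInstance : NormedAddCommGroup Wl), (inferInstance : CommRing Wl) with
    norm_mul_le := fun x y => by
      rw [norm_eq, norm_eq, norm_eq, coe_mul]
      exact tsum_norm_conv_le x.summable_norm y.summable_norm }

instance : Algebra ℂ Wl :=
  Algebra.ofModule
    (fun c x y => lp.ext (by
      rw [coe_mul, lp.coeFn_smul, lp.coeFn_smul, coe_mul]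
      have : (c • ⇑x) = fun n => c * x n := by funext n; simp
      rw [this, conv_smul_left]
      funext n; simp))
    (fun c x y => lp.ext (by
      rw [coe_mul, lp.coeFn_smul, lp.coeFn_smul, coe_mul]
      have : (c • ⇑y) = fun n => c * y n := by funext n; simp
      rw [this, conv_smul_right]
      funext n; simp))

instance : NormedAlgebra ℂ Wl :=
  { (inferInstance : Algebra ℂ Wl) with
    norm_smul_le := fun c x => norm_smul_le c x }

theorem norm_delta (k : ℤ) : ‖delta k‖ = 1 := by
  have := lp.norm_single (p := 1) (E := fun _ : ℤ => ℂ) (by norm_num) k (1:ℂ)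
  exact this.trans norm_one

theorem norm_one_W : ‖(1 : Wl)‖ = 1 := norm_delta 0

theorem delta_mul (a b : ℤ) : delta a * delta b = delta (a + b) := by
  refine lp.ext ?_
  rw [coe_mul, coe_delta, coe_delta, coe_delta, conv_deltaFn]
  funext n
  by_cases h : n = a + b
  · have : n - b = a := by omega
    simp [deltaFn, this, h]
  · have : n - b ≠ a := fun hc => h (by omega)
    simp [deltaFn, this, h]

theorem delta_pow (a : ℤ) (k : ℕ) : delta a ^ k = delta (k * a) := by
  induction k with
  | zero => simp; rfl
  | succ k ih =>
    rw [pow_succ, ih, delta_mul]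
    congr 1
    push_cast
    ring

theorem exists_eval (φ : Wl →ₐ[ℂ] ℂ) :
    ∃ z : ℂ, ‖z‖ = 1 ∧ ∀ x : Wl, φ x = ∑' n, x n * z ^ n := by
  have hb : ∀ a : Wl, ‖φ a‖ ≤ ‖a‖ := fun a => by
    have := spectrum.norm_le_norm_mul_of_mem (AlgHom.apply_mem_spectrum φ a)
    rwa [norm_one_W, mul_one] at this
  set z := φ (delta 1) with hzdef
  set w := φ (delta (-1)) with hwdef
  have hzw : z * w = 1 := by
    rw [hzdef, hwdef, ← map_mul, delta_mul]
    norm_num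
    exact map_one φ
  have hz1 : ‖z‖ ≤ 1 := by
    have := hb (delta 1); rwa [norm_delta] at this
  have hw1 : ‖w‖ ≤ 1 := by
    have := hb (delta (-1)); rwa [norm_delta] at this
  have hzwabs : ‖z‖ * ‖w‖ = 1 := by
    rw [← norm_mul, hzw, norm_one]
  have habs : ‖z‖ = 1 := by
    nlinarith [norm_nonneg z, norm_nonneg w]
  have hz0 : z ≠ 0 := by
    intro h0
    rw [h0, norm_zero] at habs
    norm_num at habs
  have hw : w = z⁻¹ := by
    field_simp
    linear_combination hzw
  have hnat : ∀ k : ℕ, φ (delta (k : ℤ)) = z ^ k := by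
    intro k
    have h1 : delta (k : ℤ) = delta 1 ^ k := by rw [delta_pow]; norm_num
    rw [h1, map_pow]
  have hneg : ∀ k : ℕ, φ (delta (-(k : ℤ))) = w ^ k := by
    intro k
    have h1 : delta (-(k : ℤ)) = delta (-1) ^ k := by
      rw [delta_pow]; congr 1; ring
    rw [h1, map_pow]
  have hdelta : ∀ n : ℤ, φ (delta n) = z ^ n := by
    intro n
    cases n with
    | ofNat k => rw [Int.ofNat_eq_coe, hnat, zpow_natCast]
    | negSucc k =>
      have h1 : Int.negSucc k = -((k + 1 : ℕ) : ℤ) := by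
        rw [Int.negSucc_eq]; push_cast; ring
      rw [h1, hneg, hw, zpow_neg, zpow_natCast, inv_pow]
  refine ⟨z, habs, fun x => ?_⟩
  let φc : Wl →L[ℂ] ℂ := LinearMap.mkContinuous φ.toLinearMap 1
    (fun a => by simpa [one_mul] using hb a)
  have hφc : ∀ a : Wl, φc a = φ a := fun a => rfl
  have hsum : HasSum (fun n : ℤ => lp.single (E := fun _ : ℤ => ℂ) 1 n (x n)) x :=
    lp.hasSum_single (by norm_num) x
  have h2 := φc.hasSum hsum
  have h3 : (fun n : ℤ => φc (lp.single (E := fun _ : ℤ => ℂ) 1 n (x n)))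
      = fun n : ℤ => x n * z ^ n := by
    funext n
    have hsingle : lp.single (E := fun _ : ℤ => ℂ) 1 n (x n) = x n • delta n := by
      rw [delta, ← lp.single_smul]
      congr 1
      simp
    rw [hφc, hsingle, map_smul, hdelta, smul_eq_mul]
  rw [h3] at h2
  exact (hφc x).symm.trans h2.tsum_eq.symm

theorem eval_mul (x y : Wl) {z : ℂ} (hz : ‖z‖ = 1) :
    ∑' n, (x * y) n * z ^ n = (∑' n, x n * z ^ n) * ∑' n, y n * z ^ n := by
  have h : ∀ n : ℤ, (x * y) n = conv (⇑x) (⇑y) n := fun n => rfl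
  simp_rw [h]
  exact eval_conv x.summable_norm y.summable_norm hz

theorem eval_one {z : ℂ} : ∑' n : ℤ, (1 : Wl) n * z ^ n = 1 := by
  have h : ∀ n : ℤ, (1 : Wl) n = deltaFn 0 n := fun n => by rw [coe_one]
  simp_rw [h]
  rw [tsum_eq_single 0 (fun m hm => by simp [deltaFn, hm])]
  simp [deltaFn]

theorem exists_inverse (x : Wl) (hx : ∀ z : ℂ, ‖z‖ = 1 → (∑' n, x n * z ^ n) ≠ 0) :
    ∃ y : Wl, x * y = 1 := by
  have hu : IsUnit x := by
    by_contra hu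
    obtain ⟨χ, hχ⟩ := WeakDual.CharacterSpace.exists_apply_eq_zero hu
    obtain ⟨z, hz1, hz2⟩ := exists_eval (WeakDual.CharacterSpace.equivAlgHom χ)
    refine hx z hz1 ?_
    rw [← hz2 x]
    rw [WeakDual.CharacterSpace.equivAlgHom_coe]
    exact hχ
  obtain ⟨u, rfl⟩ := hu
  exact ⟨↑u⁻¹, u.mul_inv⟩

end Wl

end WienerAux

section BCglue

open Wl

theorem bdK_expr (t s : ℝ) :
    (Complex.exp (Complex.I * t) • ((Real.cos s : ℂ) • (1 : BC) + (Real.sin s : ℂ) • BC.j) : BC)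
      = (Complex.exp (Complex.I * ((t : ℂ) - (s : ℂ))),
        Complex.exp (Complex.I * ((t : ℂ) + (s : ℂ)))) := by
  have key : ∀ u : ℝ, Complex.exp (Complex.I * u)
      = (Real.cos u : ℂ) + (Real.sin u : ℂ) * Complex.I := by
    intro u
    rw [mul_comm, Complex.exp_mul_I, Complex.ofReal_cos, Complex.ofReal_sin]
  have e1 : Complex.exp (Complex.I * ((t : ℂ) - (s : ℂ)))
      = Complex.exp (Complex.I * t) * Complex.exp (Complex.I * ((-s : ℝ) : ℂ)) := by
    rw [← Complex.exp_add]
    push_cast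
    ring_nf
  have e2 : Complex.exp (Complex.I * ((t : ℂ) + (s : ℂ)))
      = Complex.exp (Complex.I * t) * Complex.exp (Complex.I * ((s : ℝ) : ℂ)) := by
    rw [← Complex.exp_add]
    ring_nf
  refine Prod.ext ?_ ?_
  · show Complex.exp (Complex.I * t) * ((Real.cos s : ℂ) * 1 + (Real.sin s : ℂ) * (-Complex.I))
      = _
    rw [e1, key (-s)]
    push_cast [Real.cos_neg, Real.sin_neg]
    ring
  · show Complex.exp (Complex.I * t) * ((Real.cos s : ℂ) * 1 + (Real.sin s : ℂ) * Complex.I)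
      = _
    rw [e2, key s]
    ring

theorem mem_bdK (z₁ z₂ : ℂ) (h1 : ‖z₁‖ = 1) (h2 : ‖z₂‖ = 1) :
    ((z₁, z₂) : BC) ∈ bdK := by
  refine ⟨(z₁.arg + z₂.arg) / 2, (z₂.arg - z₁.arg) / 2, ?_⟩
  rw [bdK_expr]
  have hz : ∀ z : ℂ, ‖z‖ = 1 → Complex.exp (Complex.I * (z.arg : ℂ)) = z := by
    intro z hz
    have h := Complex.norm_mul_exp_arg_mul_I z
    rw [hz, Complex.ofReal_one, one_mul, mul_comm] at h
    exact h
  have ea : ((((z₁.arg + z₂.arg) / 2 : ℝ)) : ℂ) - (((z₂.arg - z₁.arg) / 2 : ℝ) : ℂ)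
      = (z₁.arg : ℂ) := by push_cast; ring
  have eb : ((((z₁.arg + z₂.arg) / 2 : ℝ)) : ℂ) + (((z₂.arg - z₁.arg) / 2 : ℝ) : ℂ)
      = (z₂.arg : ℂ) := by push_cast; ring
  rw [ea, eb, hz z₁ h1, hz z₂ h2]

theorem bdK_abs {Z : BC} (h : Z ∈ bdK) :
    ‖Z.1‖ = 1 ∧ ‖Z.2‖ = 1 := by
  obtain ⟨t, s, rfl⟩ := h
  rw [bdK_expr]
  constructor <;>
  · simp only [Complex.norm_exp]
    norm_num [Complex.mul_re]

theorem tsum_pair {u v : ℤ → ℂ} (hu : Summable u) (hv : Summable v) :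
    ∑' n, ((u n, v n) : ℂ × ℂ) = (∑' n, u n, ∑' n, v n) :=
  (hu.hasSum.prodMk hv.hasSum).tsum_eq

theorem summable_eval (x : Wl) {z : ℂ} (hz : ‖z‖ = 1) :
    Summable fun n => x n * z ^ n := by
  have hz' : ∀ n : ℤ, ‖x n‖ = ‖x n * z ^ n‖ := by
    intro n
    rw [norm_mul, norm_zpow, hz, one_zpow, mul_one]
  exact Summable.of_norm (x.summable_norm.congr hz')

end BCglue

theorem stmt14 (f : ℤ → BC) (hf : Summable fun n => BC.dualLieNorm (f n))
    (hinv : ∀ Z ∈ bdK, IsUnit (∑' n : ℤ, f n * Z ^ n)) :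
    ∃ g : ℤ → BC, Summable (fun n => BC.dualLieNorm (g n)) ∧
      ∀ Z ∈ bdK, (∑' n : ℤ, f n * Z ^ n) * (∑' n : ℤ, g n * Z ^ n) = 1 := by
  have hs1 : Summable fun n => ‖(f n).1‖ := by
    refine Summable.of_nonneg_of_le (fun _ => norm_nonneg _) (fun n => ?_) hf
    exact le_add_of_nonneg_right (norm_nonneg _)
  have hs2 : Summable fun n => ‖(f n).2‖ := by
    refine Summable.of_nonneg_of_le (fun _ => norm_nonneg _) (fun n => ?_) hf
    exact le_add_of_nonneg_left (norm_nonneg _)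
  let x1 : Wl := ⟨fun n => (f n).1, Wl.memℓp_of_summable hs1⟩
  let x2 : Wl := ⟨fun n => (f n).2, Wl.memℓp_of_summable hs2⟩
  have hc1 : ∀ n, x1 n = (f n).1 := fun n => rfl
  have hc2 : ∀ n, x2 n = (f n).2 := fun n => rfl
  have hpairx : ∀ (z₁ z₂ : ℂ), (fun n : ℤ => f n * ((z₁, z₂) : BC) ^ n)
      = fun n : ℤ => ((x1 n * z₁ ^ n, x2 n * z₂ ^ n) : ℂ × ℂ) := fun z₁ z₂ => rfl
  have htx : ∀ (z₁ z₂ : ℂ), ‖z₁‖ = 1 → ‖z₂‖ = 1 →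
      ∑' n : ℤ, f n * ((z₁, z₂) : BC) ^ n
        = (∑' n, x1 n * z₁ ^ n, ∑' n, x2 n * z₂ ^ n) := by
    intro z₁ z₂ h1 h2
    rw [hpairx z₁ z₂]
    exact tsum_pair (summable_eval x1 h1) (summable_eval x2 h2)
  have hx1 : ∀ z : ℂ, ‖z‖ = 1 → (∑' n, x1 n * z ^ n) ≠ 0 := by
    intro z hz
    have hZ := hinv (z, z) (mem_bdK z z hz hz)
    rw [htx z z hz hz] at hZ
    have := hZ.map (RingHom.fst ℂ ℂ)
    simpa using this.ne_zero
  have hx2 : ∀ z : ℂ, ‖z‖ = 1 → (∑' n, x2 n * z ^ n) ≠ 0 := by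
    intro z hz
    have hZ := hinv (z, z) (mem_bdK z z hz hz)
    rw [htx z z hz hz] at hZ
    have := hZ.map (RingHom.snd ℂ ℂ)
    simpa using this.ne_zero
  obtain ⟨y1, hy1⟩ := Wl.exists_inverse x1 hx1
  obtain ⟨y2, hy2⟩ := Wl.exists_inverse x2 hx2
  refine ⟨fun n => (y1 n, y2 n), ?_, ?_⟩
  · refine (y1.summable_norm.add y2.summable_norm).congr fun n => ?_
    simp [BC.dualLieNorm]
  · intro Z hZ
    obtain ⟨h1, h2⟩ := bdK_abs hZ
    have hZeq : Z = ((Z.1, Z.2) : BC) := rfl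
    have hpairy : (fun n : ℤ => ((y1 n, y2 n) : BC) * ((Z.1, Z.2) : BC) ^ n)
        = fun n : ℤ => ((y1 n * Z.1 ^ n, y2 n * Z.2 ^ n) : ℂ × ℂ) := rfl
    have hty : ∑' n : ℤ, ((y1 n, y2 n) : BC) * Z ^ n
        = (∑' n, y1 n * Z.1 ^ n, ∑' n, y2 n * Z.2 ^ n) := by
      rw [hZeq, hpairy]
      exact tsum_pair (summable_eval y1 h1) (summable_eval y2 h2)
    have htx' : ∑' n : ℤ, f n * Z ^ n
        = (∑' n, x1 n * Z.1 ^ n, ∑' n, x2 n * Z.2 ^ n) := by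
      rw [hZeq]; exact htx Z.1 Z.2 h1 h2
    rw [htx', hty]
    have hgoal1 : (∑' n, x1 n * Z.1 ^ n) * (∑' n, y1 n * Z.1 ^ n) = 1 := by
      rw [← Wl.eval_mul x1 y1 h1, hy1]
      exact Wl.eval_one
    have hgoal2 : (∑' n, x2 n * Z.2 ^ n) * (∑' n, y2 n * Z.2 ^ n) = 1 := by
      rw [← Wl.eval_mul x2 y2 h2, hy2]
      exact Wl.eval_one
    refine Prod.ext ?_ ?_
    · simpa using hgoal1
    · simpa using hgoal2
end

section
/- For fixed a ∈ ℝ and t ∈ ℝ, the superoscillatory sequence F_m(t,a) = (cos(t/m) + i a sin(t/m))^m converges to e^{iat} as m → ∞, and the convergence is uniform on compact subsets of ℝ in the variable t. -/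
open Complex Filter

/-- The superoscillatory sequence `F_m(t,a) = (cos(t/m) + i a sin(t/m))^m`. -/
noncomputable def supOsc (m : ℕ) (t a : ℝ) : ℂ :=
  (Complex.cos (t / m) + Complex.I * a * Complex.sin (t / m)) ^ m

private lemma cos_close {x : ℝ} (hx : |x| ≤ 1) : |Real.cos x - 1| ≤ x ^ 2 := by
  have h := Real.cos_bound hx
  have h4 : |x| ^ 4 ≤ x ^ 2 := by
    calc |x| ^ 4 ≤ |x| ^ 2 := pow_le_pow_of_le_one (abs_nonneg x) hx (by norm_num)
    _ = x ^ 2 := sq_abs x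
  rw [abs_le] at h ⊢
  constructor <;> nlinarith [h.1, h.2]

private lemma sin_close {x : ℝ} (hx : |x| ≤ 1) : |Real.sin x - x| ≤ x ^ 2 := by
  have h := Real.sin_bound hx
  have h4 : |x| ^ 4 ≤ x ^ 2 := by
    calc |x| ^ 4 ≤ |x| ^ 2 := pow_le_pow_of_le_one (abs_nonneg x) hx (by norm_num)
    _ = x ^ 2 := sq_abs x
  have h3 : |x ^ 3| ≤ x ^ 2 := by
    rw [_root_.abs_pow]
    calc |x| ^ 3 ≤ |x| ^ 2 := pow_le_pow_of_le_one (abs_nonneg x) hx (by norm_num)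
    _ = x ^ 2 := sq_abs x
  rw [abs_le] at h h3 ⊢
  constructor <;> nlinarith [h.1, h.2, h3.1, h3.2, pow_le_pow_of_le_one (abs_nonneg x) hx (by norm_num : 2 ≤ 5), sq_abs x]

/-- norm of x^n - y^n bound -/
private lemma pow_diff_norm (x y : ℂ) (M : ℝ) (hx : ‖x‖ ≤ M) (hy : ‖y‖ ≤ M) :
    ∀ n : ℕ, ‖x ^ n - y ^ n‖ ≤ n * M ^ (n - 1) * ‖x - y‖ := by
  have hM : 0 ≤ M := le_trans (norm_nonneg x) hx
  intro n
  induction n with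
  | zero => simp
  | succ n ih =>
    have key : x ^ (n + 1) - y ^ (n + 1) = x ^ n * (x - y) + (x ^ n - y ^ n) * y := by ring
    rw [key]
    calc ‖x ^ n * (x - y) + (x ^ n - y ^ n) * y‖
        ≤ ‖x ^ n * (x - y)‖ + ‖(x ^ n - y ^ n) * y‖ := norm_add_le _ _
      _ = ‖x‖ ^ n * ‖x - y‖ + ‖x ^ n - y ^ n‖ * ‖y‖ := by rw [norm_mul, norm_mul, norm_pow]
      _ ≤ M ^ n * ‖x - y‖ + (n * M ^ (n - 1) * ‖x - y‖) * M := by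
          gcongr
      _ ≤ (n + 1 : ℕ) * M ^ ((n + 1) - 1) * ‖x - y‖ := by
          rcases Nat.eq_zero_or_pos n with h0 | h0
          · subst h0; simp
          · have h2 : (n : ℝ) * M ^ (n - 1) * ‖x - y‖ * M = n * M ^ n * ‖x - y‖ := by
              have : M ^ (n - 1) * M = M ^ n := by
                rw [← pow_succ]; congr 1; omega
              rw [← this]; ring
            push_cast
            nlinarith [h2, norm_nonneg (x - y), pow_nonneg hM n]

private lemma base_diff (a s : ℝ) (hs : |s| ≤ 1) (has : |a * s| ≤ 1) :
    ‖(Complex.cos s + Complex.I * a * Complex.sin s) - Complex.exp (Complex.I * a * s)‖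
      ≤ (1 + |a| + 2 * a ^ 2) * s ^ 2 := by
  have hexp : Complex.exp (Complex.I * a * s)
      = ((Real.cos (a * s) : ℝ) : ℂ) + ((Real.sin (a * s) : ℝ) : ℂ) * Complex.I := by
    rw [show (Complex.I * a * s : ℂ) = ((a * s : ℝ) : ℂ) * Complex.I by push_cast; ring,
      Complex.exp_mul_I, Complex.ofReal_cos, Complex.ofReal_sin]
  have hz : (Complex.cos s + Complex.I * a * Complex.sin s) - Complex.exp (Complex.I * a * s)
      = ((Real.cos s - Real.cos (a * s) : ℝ) : ℂ)
        + ((a * Real.sin s - Real.sin (a * s) : ℝ) : ℂ) * Complex.I := by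
    rw [hexp, ← Complex.ofReal_cos, ← Complex.ofReal_sin]
    push_cast
    ring
  rw [hz]
  calc ‖((Real.cos s - Real.cos (a * s) : ℝ) : ℂ)
        + ((a * Real.sin s - Real.sin (a * s) : ℝ) : ℂ) * Complex.I‖
      ≤ ‖((Real.cos s - Real.cos (a * s) : ℝ) : ℂ)‖
        + ‖((a * Real.sin s - Real.sin (a * s) : ℝ) : ℂ) * Complex.I‖ := norm_add_le _ _
    _ = |Real.cos s - Real.cos (a * s)| + |a * Real.sin s - Real.sin (a * s)| := by
        rw [norm_mul, Complex.norm_I, mul_one, Complex.norm_real, Complex.norm_real,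
          Real.norm_eq_abs, Real.norm_eq_abs]
    _ ≤ (1 + |a| + 2 * a ^ 2) * s ^ 2 := by
        have h1 : |Real.cos s - 1| ≤ s ^ 2 := cos_close hs
        have h2 : |Real.cos (a * s) - 1| ≤ (a * s) ^ 2 := cos_close has
        have h3 : |Real.sin s - s| ≤ s ^ 2 := sin_close hs
        have h4 : |Real.sin (a * s) - a * s| ≤ (a * s) ^ 2 := sin_close has
        have ha : |a * Real.sin s - a * s| ≤ |a| * s ^ 2 := by
          rw [← mul_sub, abs_mul]
          exact mul_le_mul_of_nonneg_left h3 (abs_nonneg a)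
        rw [abs_le] at h1 h2 h4 ha
        have e1 : |Real.cos s - Real.cos (a * s)| ≤ s ^ 2 + (a * s) ^ 2 := by
          rw [abs_le]; constructor <;> nlinarith [h1.1, h1.2, h2.1, h2.2]
        have e2 : |a * Real.sin s - Real.sin (a * s)| ≤ |a| * s ^ 2 + (a * s) ^ 2 := by
          rw [abs_le]; constructor <;> nlinarith [h4.1, h4.2, ha.1, ha.2]
        nlinarith [e1, e2]

private lemma base_norm (a s : ℝ) :
    ‖(Complex.cos s + Complex.I * a * Complex.sin s : ℂ)‖ ≤ Real.exp (a ^ 2 * s ^ 2 / 2) := by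
  set z : ℂ := Complex.cos s + Complex.I * a * Complex.sin s with hzdef
  have hre : z.re = Real.cos s := by
    simp [hzdef, ← Complex.ofReal_cos, ← Complex.ofReal_sin]
  have him : z.im = a * Real.sin s := by
    simp [hzdef, ← Complex.ofReal_cos, ← Complex.ofReal_sin]
  have hsq : ‖z‖ ^ 2 = Real.cos s ^ 2 + (a * Real.sin s) ^ 2 := by
    rw [Complex.sq_norm, Complex.normSq_apply, hre, him]
    ring
  have hb : ‖z‖ ^ 2 ≤ 1 + a ^ 2 * s ^ 2 := by
    rw [hsq]
    nlinarith [Real.cos_sq_le_one s, Real.sin_sq_le_sq (x := s)]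
  have hexp2 : Real.exp (a ^ 2 * s ^ 2 / 2) ^ 2 = Real.exp (a ^ 2 * s ^ 2) := by
    rw [sq, ← Real.exp_add]
    ring_nf
  have he : (1 : ℝ) + a ^ 2 * s ^ 2 ≤ Real.exp (a ^ 2 * s ^ 2 / 2) ^ 2 := by
    rw [hexp2]
    linarith [Real.add_one_le_exp (a ^ 2 * s ^ 2)]
  nlinarith [hb, he, norm_nonneg z, Real.exp_pos (a ^ 2 * s ^ 2 / 2)]

private lemma key_bound (a t : ℝ) {m : ℕ} (hm : 1 ≤ m) (hs : |t / m| ≤ 1)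
    (has : |a * (t / m)| ≤ 1) :
    ‖supOsc m t a - Complex.exp (Complex.I * a * t)‖
      ≤ Real.exp (a ^ 2 * t ^ 2 / 2) * ((1 + |a| + 2 * a ^ 2) * t ^ 2) / m := by
  have hm0 : (m : ℝ) ≠ 0 := by positivity
  set s : ℝ := t / m with hsdef
  set x : ℂ := Complex.cos s + Complex.I * a * Complex.sin s with hxdef
  set y : ℂ := Complex.exp (Complex.I * a * s) with hydef
  have hye : y ^ m = Complex.exp (Complex.I * a * t) := by
    rw [hydef, ← Complex.exp_nat_mul]
    congr 1
    have hmC : (m : ℂ) ≠ 0 := Nat.cast_ne_zero.2 (by omega)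
    rw [hsdef]
    push_cast
    field_simp
  set M : ℝ := Real.exp (a ^ 2 * s ^ 2 / 2) with hMdef
  have hM1 : 1 ≤ M := Real.one_le_exp (by positivity)
  have hx : ‖x‖ ≤ M := base_norm a s
  have hy : ‖y‖ ≤ M := by
    rw [hydef]
    have hre0 : (Complex.I * a * s).re = 0 := by simp [Complex.mul_re, Complex.mul_im]
    have : ‖Complex.exp (Complex.I * a * s)‖ = 1 := by
      rw [Complex.norm_exp, hre0, Real.exp_zero]
    rw [this]; exact hM1
  have hdiff := pow_diff_norm x y M hx hy m
  have hbd : ‖x - y‖ ≤ (1 + |a| + 2 * a ^ 2) * s ^ 2 := base_diff a s hs has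
  have hsupOsc : supOsc m t a = x ^ m := by
    rw [supOsc, hxdef, hsdef]
    push_cast
    norm_num
  rw [hsupOsc, ← hye]
  have hMpow : M ^ (m - 1) ≤ Real.exp (a ^ 2 * t ^ 2 / 2) := by
    rw [hMdef, ← Real.exp_nat_mul]
    apply Real.exp_le_exp.2
    have hm1' : (1 : ℝ) ≤ (m : ℝ) := by exact_mod_cast hm
    have hmm : ((m - 1 : ℕ) : ℝ) ≤ (m : ℝ) ^ 2 := by
      have hle : ((m - 1 : ℕ) : ℝ) ≤ (m : ℝ) := by
        exact_mod_cast Nat.cast_le.2 (Nat.sub_le m 1)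
      nlinarith [hm1']
    rw [hsdef, div_pow]
    have hm2 : (0:ℝ) < (m:ℝ) ^ 2 := by positivity
    have expand : ((m - 1 : ℕ) : ℝ) * (a ^ 2 * (t ^ 2 / (m:ℝ) ^ 2) / 2)
        = (((m - 1 : ℕ) : ℝ) * a ^ 2 * t ^ 2) / ((m:ℝ) ^ 2 * 2) := by
      field_simp
    rw [expand, div_le_div_iff₀ (by positivity) (by norm_num)]
    nlinarith [mul_le_mul_of_nonneg_left hmm (mul_nonneg (sq_nonneg a) (sq_nonneg t))]
  calc ‖x ^ m - y ^ m‖ ≤ m * M ^ (m - 1) * ‖x - y‖ := hdiff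
    _ ≤ m * Real.exp (a ^ 2 * t ^ 2 / 2) * ((1 + |a| + 2 * a ^ 2) * s ^ 2) := by
        gcongr <;> first
          | exact hMpow
          | exact hbd
          | exact le_trans (norm_nonneg _) hbd
          | positivity
    _ = Real.exp (a ^ 2 * t ^ 2 / 2) * ((1 + |a| + 2 * a ^ 2) * t ^ 2) / m := by
        rw [hsdef]
        field_simp

theorem stmt17 (a : ℝ) :
    (∀ t : ℝ, Tendsto (fun m : ℕ => supOsc m t a) atTop
        (nhds (Complex.exp (Complex.I * a * t)))) ∧
    ∀ K : Set ℝ, IsCompact K →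
      TendstoUniformlyOn (fun (m : ℕ) (t : ℝ) => supOsc m t a)
        (fun t : ℝ => Complex.exp (Complex.I * a * t)) atTop K := by
  have main : ∀ K : Set ℝ, IsCompact K →
      TendstoUniformlyOn (fun (m : ℕ) (t : ℝ) => supOsc m t a)
        (fun t : ℝ => Complex.exp (Complex.I * a * t)) atTop K := by
    intro K hK
    obtain ⟨R₀, hR₀⟩ := hK.isBounded.exists_norm_le
    set R : ℝ := max R₀ 0 with hRdef
    have hR : ∀ t ∈ K, |t| ≤ R := fun t ht => le_trans (hR₀ t ht) (le_max_left _ _)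
    have hR0 : 0 ≤ R := le_max_right _ _
    set D : ℝ := Real.exp (a ^ 2 * R ^ 2 / 2) * ((1 + |a| + 2 * a ^ 2) * R ^ 2) with hD
    rw [Metric.tendstoUniformlyOn_iff]
    intro ε hε
    have h1 : ∀ᶠ m : ℕ in atTop, D / m < ε :=
      (tendsto_const_div_atTop_nhds_zero_nat D).eventually (gt_mem_nhds hε)
    have h2 : ∀ᶠ m : ℕ in atTop, R ≤ m :=
      (tendsto_natCast_atTop_atTop (R := ℝ)).eventually_ge_atTop R
    have h3 : ∀ᶠ m : ℕ in atTop, |a| * R ≤ m :=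
      (tendsto_natCast_atTop_atTop (R := ℝ)).eventually_ge_atTop (|a| * R)
    filter_upwards [h1, h2, h3, eventually_ge_atTop 1] with m hm1 hm2 hm3 hm4
    intro t ht
    have htR : |t| ≤ R := hR t ht
    have hmpos : (0:ℝ) < m := by exact_mod_cast hm4
    have hs : |t / m| ≤ 1 := by
      rw [abs_div, abs_of_pos hmpos, div_le_one hmpos]
      exact le_trans htR hm2
    have has : |a * (t / m)| ≤ 1 := by
      rw [abs_mul, abs_div, abs_of_pos hmpos, ← mul_div_assoc, div_le_one hmpos]
      calc |a| * |t| ≤ |a| * R := mul_le_mul_of_nonneg_left htR (abs_nonneg a)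
        _ ≤ m := hm3
    have hkey := key_bound a t hm4 hs has
    have ht2 : t ^ 2 ≤ R ^ 2 := by
      rw [← _root_.sq_abs t, ← _root_.sq_abs R]
      exact pow_le_pow_left₀ (abs_nonneg t) (le_trans htR (le_abs_self R)) 2
    have hmon : Real.exp (a ^ 2 * t ^ 2 / 2) * ((1 + |a| + 2 * a ^ 2) * t ^ 2) / m ≤ D / m := by
      rw [hD]
      gcongr <;> first
        | exact ht2
        | exact Real.exp_le_exp.2 (by nlinarith [sq_nonneg a, ht2])
        | positivity
    rw [dist_comm, dist_eq_norm]
    calc ‖supOsc m t a - Complex.exp (Complex.I * a * t)‖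
        ≤ Real.exp (a ^ 2 * t ^ 2 / 2) * ((1 + |a| + 2 * a ^ 2) * t ^ 2) / m := hkey
      _ ≤ D / m := hmon
      _ < ε := hm1
  refine ⟨fun t => ?_, main⟩
  exact tendstoUniformlyOn_singleton_iff_tendsto.mp (main {t} isCompact_singleton)
end
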